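/- Action of H on √α·Q² (Lemma 1.1(5)): For all x ∈ ℝ, H(√α·Q²)(x) = (2k(1−b)/b)·√(α(x))·Q(x)² + (2(b−1)/b)·√(α(x))·Q(x)^{1/b+3}; equivalently, 𝓛(Q²)(x) = SQ(x) for all x, where SQ(x) = (2k(1−b)/b)·Q(x)^{−1/b} + (2(b−1)/b)·Q(x). -/

import Mathlib

open Real MeasureTheory Filter

noncomputable section

/-- `ν = -(b+1)/2`. -/
def nuP (b : ℝ) : ℝ := -(b + 1) / 2

/-- The lefton momentum profile `Q(x) = (A(1-b)/2) (cosh(νx))^{b/ν}`. -/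
def Qp (b A : ℝ) (x : ℝ) : ℝ :=
  A * (1 - b) / 2 * Real.cosh (nuP b * x) ^ (b / nuP b)

/-- The lefton velocity profile `q(x) = A (cosh(νx))^{-1/ν}`. -/
def qp (b A : ℝ) (x : ℝ) : ℝ := A * Real.cosh (nuP b * x) ^ (-1 / nuP b)

/-- `k = (A(1-b)/2)^{1/b+1}`. -/
def kP (b A : ℝ) : ℝ := (A * (1 - b) / 2) ^ (1 / b + 1)

/-- The weight `α(x) = Q(x)^{-1/b-2}`. -/
def alphaP (b A : ℝ) (x : ℝ) : ℝ := Qp b A x ^ (-1 / b - 2)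

/-- `SQ(x) = (2k(1-b)/b) Q^{-1/b} + (2(b-1)/b) Q`. -/
def SQp (b A : ℝ) (x : ℝ) : ℝ :=
  2 * kP b A * (1 - b) / b * Qp b A x ^ (-1 / b) + 2 * (b - 1) / b * Qp b A x

/-- The Pöschl–Teller potential `H̃₀(x) = 1/4 - (b(1+2b)/4) sech²(νx)`. -/
def Htilde0 (b : ℝ) (x : ℝ) : ℝ :=
  1 / 4 - b * (1 + 2 * b) / 4 * (1 / Real.cosh (nuP b * x)) ^ 2

/-- The Schrödinger operator `(Hg)(x) = (2k/b²)(−g'' + H̃₀ g)`. -/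
def Hop (b A : ℝ) (g : ℝ → ℝ) (x : ℝ) : ℝ :=
  2 * kP b A / b ^ 2 * (-(deriv (deriv g) x) + Htilde0 b x * g x)

/-- The linearized operator `(𝓛f)(x) = k(−((2α/b²) f')' − (2(b+1)/b) α f)`. -/
def Lop (b A : ℝ) (f : ℝ → ℝ) (x : ℝ) : ℝ :=
  kP b A * (-(deriv (fun y => 2 * alphaP b A y / b ^ 2 * deriv f y) x)
    - 2 * (b + 1) / b * alphaP b A x * f x)

/-- The integrand of the conserved functional `F₂`. -/
def F2Integrand (b : ℝ) (f : ℝ → ℝ) (x : ℝ) : ℝ :=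
  f x ^ (-1 / b) * ((deriv f x) ^ 2 / (b ^ 2 * f x ^ 2) + 1)

/-- The squared weighted norm `‖f‖²_{H¹_α} = ∫ (f² + f'²) α`. -/
def HalphaSq (b A : ℝ) (f : ℝ → ℝ) : ℝ :=
  ∫ x, (f x ^ 2 + deriv f x ^ 2) * alphaP b A x

/-- The `𝒵`-norm `‖f‖_𝒵 = ‖f‖_{H¹_α} + sup_x |f(x)|/Q(x)`. -/
def ZNorm (b A : ℝ) (f : ℝ → ℝ) : ℝ :=
  Real.sqrt (HalphaSq b A f) + ⨆ x : ℝ, |f x| / Qp b A x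

/-- `m : ℝ → ℝ → ℝ` (time then space) solves the b-family equation in momentum form,
with velocity `u` satisfying `m = u - u_xx` and `m_t + u m_x + b u_x m = 0`. -/
def IsBFamilySolution (b : ℝ) (m u : ℝ → ℝ → ℝ) : Prop :=
  (∀ t x, m t x = u t x - deriv (deriv (u t)) x) ∧
  ∀ t x, deriv (fun s => m s x) t + u t x * deriv (m t) x + b * deriv (u t) x * m t x = 0

/-- `(v, h)` solves the linearization of the b-family equation around the lefton:
`h - h_xx = v` and `v_t = ∂_x(q h_xx + (b-1) q' h_x - (b+1) q h + q'' h)`. -/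
def IsLinearizedSolution (b A : ℝ) (v h : ℝ → ℝ → ℝ) : Prop :=
  (∀ t x, h t x - deriv (deriv (h t)) x = v t x) ∧
  ∀ t x, deriv (fun s => v s x) t =
    deriv (fun y => qp b A y * deriv (deriv (h t)) y
      + (b - 1) * deriv (qp b A) y * deriv (h t) y
      - (b + 1) * qp b A y * h t y + deriv (deriv (qp b A)) y * h t y) x

/-- The quadratic form `(𝓛η, η) = (2k/b²)∫ η'² α − (2k(b+1)/b)∫ η² α`. -/
def quadFormL (b A : ℝ) (η : ℝ → ℝ) : ℝ :=
  2 * kP b A / b ^ 2 * (∫ x, deriv η x ^ 2 * alphaP b A x)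
    - 2 * kP b A * (b + 1) / b * (∫ x, η x ^ 2 * alphaP b A x)

/-- The monotonicity weight `ψ_L(x) = (2/π) arctan(exp(νx/L))` with `L = 3 - b`. -/
def psiL (b : ℝ) (x : ℝ) : ℝ :=
  2 / Real.pi * Real.arctan (Real.exp (nuP b * x / (3 - b)))

lemma hasDerivAt_coshrpow (ν s x : ℝ) :
    HasDerivAt (fun y => Real.cosh (ν * y) ^ s)
      (Real.sinh (ν * x) * ν * s * Real.cosh (ν * x) ^ (s - 1)) x := by
  have h1 : HasDerivAt (fun y : ℝ => ν * y) ν x := by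
    simpa using (hasDerivAt_id x).const_mul ν
  have h2 : HasDerivAt (fun y => Real.cosh (ν * y)) (Real.sinh (ν * x) * ν) x := by
    exact (Real.hasDerivAt_cosh (ν * x)).comp x h1
  exact h2.rpow_const (Or.inl (Real.cosh_pos (ν * x)).ne')

lemma hasDerivAt_coshrpow_sinh (ν t x : ℝ) :
    HasDerivAt (fun y => Real.cosh (ν * y) ^ t * Real.sinh (ν * y))
      (ν * t * Real.sinh (ν * x) ^ 2 * Real.cosh (ν * x) ^ (t - 1)
        + ν * Real.cosh (ν * x) ^ t * Real.cosh (ν * x)) x := by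
  have h1 : HasDerivAt (fun y : ℝ => ν * y) ν x := by
    simpa using (hasDerivAt_id x).const_mul ν
  have hs : HasDerivAt (fun y => Real.sinh (ν * y)) (Real.cosh (ν * x) * ν) x := by
    exact (Real.hasDerivAt_sinh (ν * x)).comp x h1
  have := (hasDerivAt_coshrpow ν t x).mul hs
  convert this using 1
  · rfl
  · rfl
  · rfl
  · ring

lemma Qp_pos (b A : ℝ) (hb : b < -1) (hA : 0 < A) (x : ℝ) : 0 < Qp b A x :=
  mul_pos (by nlinarith) (Real.rpow_pos_of_pos (Real.cosh_pos _) _)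

lemma Qp_rpow (b A : ℝ) (hb : b < -1) (hA : 0 < A) (r x : ℝ) :
    Qp b A x ^ r = (A * (1 - b) / 2) ^ r * Real.cosh (nuP b * x) ^ (-2 * b / (b + 1) * r) := by
  have hC : (0:ℝ) ≤ A * (1 - b) / 2 := by nlinarith
  have hb1 : b + 1 ≠ 0 := by intro h; nlinarith
  have hm : (-(b + 1) : ℝ) ≠ 0 := by intro h; exact hb1 (by linarith)
  have hbn : b / nuP b = -2 * b / (b + 1) := by
    rw [show nuP b = -(b+1)/2 from rfl, div_div_eq_mul_div, div_eq_div_iff hm hb1]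
    ring
  rw [Qp, Real.mul_rpow hC (Real.rpow_nonneg (Real.cosh_pos _).le _),
      ← Real.rpow_mul (Real.cosh_pos _).le, hbn]

/-- **Action of `H` on `√α·Q²`** (Lemma 1.1(5)): `H(√α Q²) = (2k(1−b)/b) √α Q²
 + (2(b−1)/b) √α Q^{1/b+3}`; equivalently `𝓛(Q²) = SQ`. -/
theorem H_on_sqrtAlpha_Qsq (b A : ℝ) (hb : b < -1) (hA : 0 < A) :
    (∀ x : ℝ,
      Hop b A (fun y => Real.sqrt (alphaP b A y) * Qp b A y ^ 2) x
        = 2 * kP b A * (1 - b) / b * Real.sqrt (alphaP b A x) * Qp b A x ^ 2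
          + 2 * (b - 1) / b * Real.sqrt (alphaP b A x) * Qp b A x ^ (1 / b + 3)) ∧
    ∀ x : ℝ, Lop b A (fun y => Qp b A y ^ 2) x = SQp b A x := by
  constructor
  · have hb0 : b ≠ 0 := by intro h; rw [h] at hb; norm_num at hb
    have hb1 : b + 1 ≠ 0 := by intro h; nlinarith
    have hC : (0:ℝ) < A * (1 - b) / 2 := by nlinarith
    have hQy : ∀ y, 0 < Qp b A y := Qp_pos b A hb hA
    intro x
    set s := -2 * b / (b + 1) * (1 - 1 / (2 * b)) with hs
    have hg : ∀ y, Real.sqrt (alphaP b A y) * Qp b A y ^ 2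
        = (A * (1 - b) / 2) ^ (1 - 1 / (2 * b)) * Real.cosh (nuP b * y) ^ s := by
      intro y
      simp only [alphaP]
      rw [Real.sqrt_eq_rpow, ← Real.rpow_natCast (Qp b A y) 2, ← Real.rpow_mul (hQy y).le,
          ← Real.rpow_add (hQy y), Qp_rpow b A hb hA,
          show ((-1 / b - 2) * (1 / 2) + ((2:ℕ):ℝ) : ℝ) = 1 - 1 / (2 * b) from by
            push_cast; field_simp; ring,
          hs]
    have hgfun : (fun y => Real.sqrt (alphaP b A y) * Qp b A y ^ 2)
        = fun y => (A * (1 - b) / 2) ^ (1 - 1 / (2 * b)) * Real.cosh (nuP b * y) ^ s :=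
      funext hg
    have h2x : Real.sqrt (alphaP b A x) * Qp b A x ^ (1 / b + 3)
        = kP b A * ((A * (1 - b) / 2) ^ (1 - 1 / (2 * b)) * Real.cosh (nuP b * x) ^ (s - 2)) := by
      simp only [alphaP]
      rw [Real.sqrt_eq_rpow, ← Real.rpow_mul (hQy x).le, ← Real.rpow_add (hQy x),
          Qp_rpow b A hb hA,
          show (-2 * b / (b + 1) * ((-1 / b - 2) * (1 / 2) + (1 / b + 3)) : ℝ) = s - 2 from by
            rw [hs]; field_simp; ring,
          show ((-1 / b - 2) * (1 / 2) + (1 / b + 3) : ℝ) = (1 / b + 1) + (1 - 1 / (2 * b)) from by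
            field_simp; ring,
          Real.rpow_add hC, show (A * (1 - b) / 2) ^ (1 / b + 1) = kP b A from rfl]
      ring
    have hR : 2 * kP b A * (1 - b) / b * Real.sqrt (alphaP b A x) * Qp b A x ^ 2
        + 2 * (b - 1) / b * Real.sqrt (alphaP b A x) * Qp b A x ^ (1 / b + 3)
        = 2 * kP b A * (1 - b) / b
            * ((A * (1 - b) / 2) ^ (1 - 1 / (2 * b)) * Real.cosh (nuP b * x) ^ s)
          + 2 * (b - 1) / b
            * (kP b A * ((A * (1 - b) / 2) ^ (1 - 1 / (2 * b)) * Real.cosh (nuP b * x) ^ (s - 2))) := by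
      rw [← hg x, ← h2x]; ring
    have d1 : deriv (fun y => (A * (1 - b) / 2) ^ (1 - 1 / (2 * b)) * Real.cosh (nuP b * y) ^ s)
        = fun z => ((A * (1 - b) / 2) ^ (1 - 1 / (2 * b)) * (nuP b * s))
            * (Real.cosh (nuP b * z) ^ (s - 1) * Real.sinh (nuP b * z)) := by
      funext z
      rw [(HasDerivAt.const_mul ((A * (1 - b) / 2) ^ (1 - 1 / (2 * b)))
            (hasDerivAt_coshrpow (nuP b) s z)).deriv]
      ring
    have hd2 := HasDerivAt.const_mul
        ((A * (1 - b) / 2) ^ (1 - 1 / (2 * b)) * (nuP b * s))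
        (hasDerivAt_coshrpow_sinh (nuP b) (s - 1) x)
    have e1 : Real.cosh (nuP b * x) ^ (s - 1)
        = Real.cosh (nuP b * x) ^ (s - 2) * Real.cosh (nuP b * x) := by
      rw [← Real.rpow_add_one (Real.cosh_pos _).ne' (s - 2)]
      congr 1; ring
    have e2 : Real.cosh (nuP b * x) ^ s
        = Real.cosh (nuP b * x) ^ (s - 2) * Real.cosh (nuP b * x) ^ 2 := by
      rw [← Real.rpow_natCast (Real.cosh (nuP b * x)) 2, ← Real.rpow_add (Real.cosh_pos _)]
      congr 1; push_cast; ring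
    simp only [Hop, Htilde0]
    rw [hR, hg x, hgfun, d1, hd2.deriv,
        show (s - 1 - 1 : ℝ) = s - 2 from by ring, Real.sinh_sq, e1, e2]
    have hc0 : Real.cosh (nuP b * x) ≠ 0 := (Real.cosh_pos _).ne'
    generalize hW : Real.cosh (nuP b * x) ^ (s - 2) = W
    generalize hcc : Real.cosh (nuP b * x) = c
    rw [hcc] at hc0
    rw [hs, show nuP b = -(b+1)/2 from rfl]
    field_simp
    ring
  · have hb0 : b ≠ 0 := by intro h; rw [h] at hb; norm_num at hb
    have hb1 : b + 1 ≠ 0 := by intro h; nlinarith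
    have hm : (-(b + 1) : ℝ) ≠ 0 := by intro h; exact hb1 (by linarith)
    have hC : (0:ℝ) < A * (1 - b) / 2 := by nlinarith
    have hQy : ∀ y, 0 < Qp b A y := Qp_pos b A hb hA
    intro x
    have hf2 : (fun y => Qp b A y ^ 2)
        = fun y => (A * (1 - b) / 2) ^ ((2:ℕ):ℝ)
            * Real.cosh (nuP b * y) ^ (-2 * b / (b + 1) * ((2:ℕ):ℝ)) := by
      funext y
      rw [← Real.rpow_natCast (Qp b A y) 2, Qp_rpow b A hb hA]
    have hdf : deriv (fun y => Qp b A y ^ 2)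
        = fun z => (A * (1 - b) / 2) ^ ((2:ℕ):ℝ)
            * (Real.sinh (nuP b * z) * nuP b * (-2 * b / (b + 1) * ((2:ℕ):ℝ))
              * Real.cosh (nuP b * z) ^ (-2 * b / (b + 1) * ((2:ℕ):ℝ) - 1)) := by
      rw [hf2]
      funext z
      exact (HasDerivAt.const_mul ((A * (1 - b) / 2) ^ ((2:ℕ):ℝ))
        (hasDerivAt_coshrpow (nuP b) (-2 * b / (b + 1) * ((2:ℕ):ℝ)) z)).deriv
    have hG : (fun y => 2 * alphaP b A y / b ^ 2 * deriv (fun y => Qp b A y ^ 2) y)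
        = fun y => (4 / b * (A * (1 - b) / 2) ^ (-1 / b))
            * (Real.cosh (nuP b * y) ^ (2 / (b + 1) - 1) * Real.sinh (nuP b * y)) := by
      funext y
      simp only [hdf, alphaP]
      rw [Qp_rpow b A hb hA,
          show (2 / (b + 1) - 1 : ℝ)
              = -2 * b / (b + 1) * (-1 / b - 2) + (-2 * b / (b + 1) * ((2:ℕ):ℝ) - 1) from by
            push_cast; field_simp; ring,
          Real.rpow_add (Real.cosh_pos _),
          show ((A * (1 - b) / 2 : ℝ)) ^ (-1 / b)
              = (A * (1 - b) / 2) ^ (-1 / b - 2) * (A * (1 - b) / 2) ^ ((2:ℕ):ℝ) from by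
            rw [← Real.rpow_add hC]; congr 1; push_cast; ring,
          show nuP b = -(b+1)/2 from rfl]
      push_cast
      field_simp
      ring
    have hd2 := HasDerivAt.const_mul (4 / b * (A * (1 - b) / 2) ^ (-1 / b))
        (hasDerivAt_coshrpow_sinh (nuP b) (2 / (b + 1) - 1) x)
    have hαQ : alphaP b A x * Qp b A x ^ 2
        = (A * (1 - b) / 2) ^ (-1 / b) * Real.cosh (nuP b * x) ^ (2 / (b + 1) - 1 + 1) := by
      simp only [alphaP]
      rw [← Real.rpow_natCast (Qp b A x) 2, ← Real.rpow_add (hQy x), Qp_rpow b A hb hA,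
          show (-2 * b / (b + 1) * (-1 / b - 2 + ((2:ℕ):ℝ)) : ℝ) = 2 / (b + 1) - 1 + 1 from by
            push_cast; field_simp; ring,
          show ((-1 / b - 2 + ((2:ℕ):ℝ)) : ℝ) = -1 / b from by push_cast; ring]
    have hQx : Qp b A x = kP b A * ((A * (1 - b) / 2) ^ (-1 / b)
        * Real.cosh (nuP b * x) ^ (2 / (b + 1) - 1 - 1)) := by
      have key : kP b A * ((A * (1 - b) / 2) ^ (-1 / b)
          * Real.cosh (nuP b * x) ^ (2 / (b + 1) - 1 - 1))
          = (A * (1 - b) / 2) * Real.cosh (nuP b * x) ^ (2 / (b + 1) - 1 - 1) := by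
        rw [← mul_assoc, show kP b A = (A * (1 - b) / 2) ^ (1 / b + 1) from rfl,
            ← Real.rpow_add hC, show (1 / b + 1 + -1 / b : ℝ) = 1 from by ring, Real.rpow_one]
      rw [key, Qp]
      congr 2
      rw [show nuP b = -(b+1)/2 from rfl, div_div_eq_mul_div, div_neg]
      field_simp
      ring
    have f1 : Real.cosh (nuP b * x) ^ (2 / (b + 1) - 1)
        = Real.cosh (nuP b * x) ^ (2 / (b + 1) - 1 - 1) * Real.cosh (nuP b * x) := by
      rw [← Real.rpow_add_one (Real.cosh_pos _).ne' (2 / (b + 1) - 1 - 1)]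
      congr 1; ring
    have f2 : Real.cosh (nuP b * x) ^ (2 / (b + 1) - 1 + 1)
        = Real.cosh (nuP b * x) ^ (2 / (b + 1) - 1 - 1) * Real.cosh (nuP b * x) ^ 2 := by
      rw [← Real.rpow_natCast (Real.cosh (nuP b * x)) 2, ← Real.rpow_add (Real.cosh_pos _)]
      congr 1; push_cast; ring
    simp only [Lop, SQp]
    rw [hG, hd2.deriv, mul_assoc (2 * (b + 1) / b) (alphaP b A x) (Qp b A x ^ 2), hαQ,
        Qp_rpow b A hb hA,
        show (-2 * b / (b + 1) * (-1 / b) : ℝ) = 2 / (b + 1) - 1 + 1 from by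
          field_simp; ring,
        hQx, Real.sinh_sq, f1, f2]
    have hc0 : Real.cosh (nuP b * x) ≠ 0 := (Real.cosh_pos _).ne'
    generalize hW : Real.cosh (nuP b * x) ^ (2 / (b + 1) - 1 - 1) = W
    generalize hcc : Real.cosh (nuP b * x) = c
    rw [hcc] at hc0
    rw [show nuP b = -(b+1)/2 from rfl]
    field_simp
    ring
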